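/- arXiv:1603.07826 — 2 statements merged into one kernel-verified Lean document; each statement's English description precedes it below -/
import Mathlib

section
/- (Theorem 3) Let t be a real number with |t| < 1. For m ≥ 1 let A_n^{(m)}(t) denote the n-th derivative at x = 0 of the function x ↦ ((1-t)/(e^{x(t-1)} - t))^m. Then for all n, N ∈ ℕ, the series Σ_{j=0}^{∞} t^j (j+1)^{n+N} converges and equals (1-t)^{-n} · Σ_{i=1}^{N+1} a_{i-1}(N, t) · (1-t)^{-i} · A_n^{(i)}(t). -/
/-- The coefficients `a i N t` defined by `a 0 N t = 1` and, for `1 ≤ i ≤ N`,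
`a i N t = i * t * ∑_{j=0}^{N-i} (i+1)^j * a (i-1) (N-j-1) t`. -/
noncomputable def eulerianCoeff : ℕ → ℕ → ℝ → ℝ
  | 0, _, _ => 1
  | (i + 1), N, t =>
      ((i : ℝ) + 1) * t *
        ∑ j ∈ Finset.range (N - (i + 1) + 1),
          ((i : ℝ) + 2) ^ j * eulerianCoeff i (N - j - 1) t

/-- `higherEulerian t m n` is the `n`-th Eulerian polynomial of order `m`, evaluated at `t`,
defined as the `n`-th derivative at `x = 0` of `x ↦ ((1-t)/(e^{x(t-1)} - t))^m`. -/
noncomputable def higherEulerian (t : ℝ) (m n : ℕ) : ℝ :=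
  iteratedDeriv n (fun x : ℝ => ((1 - t) / (Real.exp (x * (t - 1)) - t)) ^ m) 0

open Finset Filter Topology

lemma choose_le_pow_nat (m : ℕ) : ∀ j : ℕ, (j + m).choose m ≤ (j + 1) ^ m := by
  induction m with
  | zero => intro j; simp
  | succ m ih =>
    intro j
    induction j with
    | zero => simp
    | succ j ihj =>
      have h1 : (j + 1 + (m + 1)).choose (m + 1)
          = (j + (m + 1)).choose m + (j + (m + 1)).choose (m + 1) := by
        rw [show j + 1 + (m + 1) = (j + (m + 1)) + 1 by omega]
        exact Nat.choose_succ_succ _ _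
      have h2 : (j + (m + 1)).choose m ≤ (j + 2) ^ m := by
        have := ih (j + 1)
        rwa [show j + 1 + m = j + (m + 1) by omega] at this
      have h3 : (j + (m + 1)).choose (m + 1) ≤ (j + 1) ^ (m + 1) := ihj
      calc (j + 1 + (m + 1)).choose (m + 1) ≤ (j + 2) ^ m + (j + 1) ^ (m + 1) := by
            rw [h1]; exact Nat.add_le_add h2 h3
        _ ≤ (j + 2) ^ m + (j + 1) * (j + 2) ^ m := by
            have : (j + 1) ^ (m + 1) ≤ (j + 1) * (j + 2) ^ m := by
              rw [pow_succ']
              exact Nat.mul_le_mul_left _ (Nat.pow_le_pow_left (by omega) m)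
            omega
        _ = (j + 2) ^ (m + 1) := by ring
        _ = (j + 1 + 1) ^ (m + 1) := by norm_num

section
variable {t : ℝ}

lemma he_zero (ht : t ≠ 1) (m : ℕ) : higherEulerian t m 0 = 1 := by
  have h1t : (1:ℝ) - t ≠ 0 := sub_ne_zero_of_ne (Ne.symm ht)
  simp [higherEulerian, iteratedDeriv_zero, Real.exp_zero, div_self h1t]

lemma he_succ (ht : t ≠ 1) (m n : ℕ) :
    higherEulerian t (m + 1) (n + 1)
      = ((m:ℝ) + 1) * (1 - t) * higherEulerian t (m + 1) n
        + ((m:ℝ) + 1) * t * higherEulerian t (m + 2) n := by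
  have h1t : (1:ℝ) - t ≠ 0 := sub_ne_zero_of_ne (Ne.symm ht)
  set E : ℝ → ℝ := fun x => Real.exp (x * (t - 1)) with hE
  set U : Set ℝ := {x | E x - t ≠ 0} with hUdef
  have hcont : Continuous fun x : ℝ => E x - t :=
    (Real.continuous_exp.comp (continuous_id.mul continuous_const)).sub continuous_const
  have hU : IsOpen U := by
    have : U = (fun x => E x - t) ⁻¹' {0}ᶜ := by
      ext x; simp [hUdef]
    rw [this]
    exact hcont.isOpen_preimage _ isOpen_compl_singleton
  have h0 : (0:ℝ) ∈ U := by
    simp only [hUdef, Set.mem_setOf_eq, hE, zero_mul, Real.exp_zero]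
    exact h1t
  have hmem : U ∈ 𝓝 (0:ℝ) := hU.mem_nhds h0
  have hder : ∀ (k : ℕ) (x : ℝ), x ∈ U →
      HasDerivAt (fun y => ((1 - t) / (E y - t)) ^ (k+1))
        (((k:ℝ)+1) * (1 - t) * ((1 - t) / (E x - t)) ^ (k+1)
          + ((k:ℝ)+1) * t * ((1 - t) / (E x - t)) ^ (k+2)) x := by
    intro k x hx
    have hx' : E x - t ≠ 0 := hx
    have hdE : HasDerivAt (fun y => E y - t) ((t - 1) * E x) x := by
      have h1 : HasDerivAt (fun y : ℝ => y * (t-1)) (t-1) x := hasDerivAt_mul_const _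
      have h2 := (Real.hasDerivAt_exp (x * (t-1))).comp x h1
      simpa [hE, mul_comm] using h2.sub_const t
    have hgd : HasDerivAt (fun y => (1 - t) / (E y - t))
        ((0 * (E x - t) - (1 - t) * ((t - 1) * E x)) / (E x - t)^2) x :=
      (hasDerivAt_const x (1-t)).div hdE hx'
    have h3 := hgd.pow (k+1)
    refine h3.congr_deriv ?_
    have hEx : E x = (E x - t) + t := by ring
    set d := E x - t
    rw [hEx]
    simp only [Nat.add_sub_cancel]
    rw [div_pow, div_pow, div_pow]
    field_simp
    push_cast
    ring
  -- main computation
  show iteratedDeriv (n+1) (fun x : ℝ => ((1 - t) / (E x - t)) ^ (m+1)) 0 = _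
  rw [iteratedDeriv_succ']
  have heq : deriv (fun x : ℝ => ((1 - t) / (E x - t)) ^ (m+1))
      =ᶠ[𝓝 (0:ℝ)] fun x => ((m:ℝ)+1) * (1-t) * ((1 - t) / (E x - t)) ^ (m+1)
        + ((m:ℝ)+1) * t * ((1 - t) / (E x - t)) ^ (m+2) := by
    filter_upwards [hmem] with x hx
    exact (hder m x hx).deriv
  rw [heq.iteratedDeriv_eq n]
  have hUu : UniqueDiffOn ℝ U := hU.uniqueDiffOn
  have hC : ∀ j : ℕ, ContDiffOn ℝ n (fun x => ((1 - t) / (E x - t)) ^ j) U := by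
    intro j
    refine ContDiffOn.pow ?_ j
    refine ContDiffOn.div contDiffOn_const ?_ (fun x hx => hx)
    exact (((Real.contDiff_exp.comp (contDiff_id.mul contDiff_const)).sub
      contDiff_const).contDiffOn)
  have key : ∀ F : ℝ → ℝ, iteratedDeriv n F 0 = iteratedDerivWithin n F U 0 := by
    intro F
    rw [iteratedDeriv_eq_iteratedFDeriv, iteratedDerivWithin_eq_iteratedFDerivWithin,
      iteratedFDerivWithin_of_isOpen n hU h0]
  rw [key]
  have hsplit : (fun x => ((m:ℝ)+1) * (1-t) * ((1 - t) / (E x - t)) ^ (m+1)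
        + ((m:ℝ)+1) * t * ((1 - t) / (E x - t)) ^ (m+2))
      = (fun x => (((m:ℝ)+1) * (1-t)) * ((1 - t) / (E x - t)) ^ (m+1))
        + (fun x => (((m:ℝ)+1) * t) * ((1 - t) / (E x - t)) ^ (m+2)) := rfl
  rw [hsplit, iteratedDerivWithin_add h0 hUu
      (contDiffOn_const.mul (hC (m+1)) 0 h0) (contDiffOn_const.mul (hC (m+2)) 0 h0),
    iteratedDerivWithin_const_mul h0 hUu _ (hC (m+1) 0 h0),
    iteratedDerivWithin_const_mul h0 hUu _ (hC (m+2) 0 h0), ← key, ← key]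
  rfl


lemma summable_choose_mul (ht : |t| < 1) (m : ℕ) :
    Summable (fun j : ℕ => ((j + m).choose m : ℝ) * t ^ j) := by
  have habs : ‖|t|‖ < 1 := by rwa [Real.norm_eq_abs, abs_abs]
  have hsum : Summable (fun j : ℕ => ((j:ℝ) + 1) ^ m * |t| ^ j) := by
    have hfun : (fun j : ℕ => ((j:ℝ) + 1) ^ m * |t| ^ j)
        = fun j : ℕ => ∑ k ∈ Finset.range (m + 1),
            ((m.choose k : ℝ) * ((j:ℝ) ^ k * |t| ^ j)) := by
      funext j
      rw [add_pow, Finset.sum_mul]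
      exact Finset.sum_congr rfl fun k _ => by ring
    rw [hfun]
    exact summable_sum fun k _ =>
      ((summable_pow_mul_geometric_of_norm_lt_one k habs).mul_left _)
  refine Summable.of_norm_bounded hsum fun j => ?_
  rw [norm_mul, norm_pow, Real.norm_eq_abs, Real.norm_eq_abs, Nat.abs_cast]
  gcongr
  calc ((j + m).choose m : ℝ) ≤ ((j + 1) ^ m : ℕ) := by exact_mod_cast choose_le_pow_nat m j
    _ = ((j : ℝ) + 1) ^ m := by push_cast; ring

lemma hasSum_choose (ht : |t| < 1) :
    ∀ m : ℕ, HasSum (fun j : ℕ => ((j + m).choose m : ℝ) * t ^ j) (((1 - t) ^ (m + 1))⁻¹) := by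
  have h1t : (1:ℝ) - t ≠ 0 := ne_of_gt (by linarith [(abs_lt.1 ht).2])
  intro m
  induction m with
  | zero => simpa using hasSum_geometric_of_abs_lt_one ht
  | succ m ih =>
    obtain ⟨S, hS⟩ := (summable_choose_mul ht (m + 1))
    have h2 : HasSum (fun j : ℕ => (Nat.casesOn j 0 fun k =>
        t * (((k + (m + 1)).choose (m + 1) : ℝ) * t ^ k) : ℝ)) (t * S) := by
      have h1 : HasSum (fun j : ℕ => t * (((j + (m + 1)).choose (m + 1) : ℝ) * t ^ j)) (t * S) :=
        hS.mul_left t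
      have := (hasSum_nat_add_iff (f := fun j : ℕ => (Nat.casesOn j 0 fun k =>
        t * (((k + (m + 1)).choose (m + 1) : ℝ) * t ^ k) : ℝ)) 1).mp h1
      simpa using this
    have h3 := hS.sub h2
    have h4 : (fun j : ℕ => ((j + (m + 1)).choose (m + 1) : ℝ) * t ^ j -
        (Nat.casesOn j 0 fun k => t * (((k + (m + 1)).choose (m + 1) : ℝ) * t ^ k) : ℝ))
        = fun j : ℕ => ((j + m).choose m : ℝ) * t ^ j := by
      funext j
      cases j with
      | zero => simp
      | succ k =>
        show ((k + 1 + (m + 1)).choose (m + 1) : ℝ) * t ^ (k+1)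
            - t * (((k + (m + 1)).choose (m + 1) : ℝ) * t ^ k)
          = ((k + 1 + m).choose m : ℝ) * t ^ (k+1)
        have hp : (k + 1 + (m + 1)).choose (m + 1)
            = (k + (m+1)).choose m + (k + (m+1)).choose (m + 1) := by
          rw [show k + 1 + (m + 1) = (k + (m + 1)) + 1 by omega]
          exact Nat.choose_succ_succ _ _
        rw [hp, show k + 1 + m = k + (m + 1) by omega]
        push_cast
        ring
    rw [h4] at h3
    have hval : S - t * S = ((1 - t) ^ (m + 1))⁻¹ := h3.unique ih
    have hSval : S = ((1 - t) ^ (m + 1 + 1))⁻¹ := by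
      have h5 : S * (1 - t) = ((1 - t) ^ (m + 1))⁻¹ := by rw [← hval]; ring
      rw [pow_succ, mul_inv, ← h5]
      field_simp
    rwa [hSval] at hS


lemma keyHasSum (ht : |t| < 1) : ∀ n m : ℕ,
    HasSum (fun j : ℕ => ((j + m).choose m : ℝ) * t ^ j * ((j:ℝ) + m + 1) ^ n)
      (((1 - t) ^ (n + m + 1))⁻¹ * higherEulerian t (m + 1) n) := by
  have ht1 : t ≠ 1 := by have := (abs_lt.1 ht).2; exact ne_of_lt this
  have h1t : (1:ℝ) - t ≠ 0 := ne_of_gt (by linarith [(abs_lt.1 ht).2])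
  intro n
  induction n with
  | zero =>
    intro m
    simpa [he_zero ht1] using hasSum_choose ht m
  | succ n ih =>
    intro m
    have IH1 := (ih m).mul_left ((m:ℝ) + 1)
    have IH2 := (ih (m + 1)).mul_left (((m:ℝ) + 1) * t)
    have h2 : HasSum (fun j : ℕ => (Nat.casesOn j 0 fun k =>
          ((m:ℝ) + 1) * t * (((k + (m + 1)).choose (m + 1) : ℝ) * t ^ k
            * ((k:ℝ) + (m + 1) + 1) ^ n) : ℝ))
        ((((m:ℝ) + 1) * t) * (((1 - t) ^ (n + (m + 1) + 1))⁻¹ * higherEulerian t (m + 2) n)) := by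
      have := (hasSum_nat_add_iff (f := fun j : ℕ => (Nat.casesOn j 0 fun k =>
          ((m:ℝ) + 1) * t * (((k + (m + 1)).choose (m + 1) : ℝ) * t ^ k
            * ((k:ℝ) + (m + 1) + 1) ^ n) : ℝ)) 1).mp (by simpa using IH2)
      simpa using this
    have h3 := IH1.add h2
    have hfun : (fun j : ℕ => ((m:ℝ) + 1) * (((j + m).choose m : ℝ) * t ^ j * ((j:ℝ) + m + 1) ^ n)
          + (Nat.casesOn j 0 fun k =>
            ((m:ℝ) + 1) * t * (((k + (m + 1)).choose (m + 1) : ℝ) * t ^ k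
              * ((k:ℝ) + (m + 1) + 1) ^ n) : ℝ))
        = fun j : ℕ => ((j + m).choose m : ℝ) * t ^ j * ((j:ℝ) + m + 1) ^ (n + 1) := by
      funext j
      cases j with
      | zero => simp [pow_succ]; ring
      | succ k =>
        have hpas : ((k + m + 2) : ℝ) * ((k + m + 1).choose m : ℝ)
            = (((k + m + 2).choose (m + 1)) : ℝ) * ((m:ℝ) + 1) := by
          exact_mod_cast Nat.add_one_mul_choose_eq (k + m + 1) m
        have hps : ((k + m + 2).choose (m + 1) : ℝ)
            = ((k + m + 1).choose m : ℝ) + ((k + m + 1).choose (m + 1) : ℝ) := by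
          exact_mod_cast Nat.choose_succ_succ (k + m + 1) m
        show ((m:ℝ) + 1) * (((k + 1 + m).choose m : ℝ) * t ^ (k+1) * (((k+1:ℕ):ℝ) + m + 1) ^ n)
            + ((m:ℝ) + 1) * t * (((k + (m + 1)).choose (m + 1) : ℝ) * t ^ k
              * ((k:ℝ) + ((m:ℝ) + 1) + 1) ^ n)
          = ((k + 1 + m).choose m : ℝ) * t ^ (k+1) * (((k+1:ℕ):ℝ) + m + 1) ^ (n + 1)
        rw [show k + 1 + m = k + m + 1 by omega, show k + (m + 1) = k + m + 1 by omega]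
        rw [hps] at hpas
        push_cast
        linear_combination (-(t ^ k * t * ((k:ℝ) + m + 2) ^ n)) * hpas
    have hval : (((m:ℝ) + 1) * (((1 - t) ^ (n + m + 1))⁻¹ * higherEulerian t (m + 1) n))
          + ((((m:ℝ) + 1) * t) * (((1 - t) ^ (n + (m + 1) + 1))⁻¹ * higherEulerian t (m + 2) n))
        = ((1 - t) ^ (n + 1 + m + 1))⁻¹ * higherEulerian t (m + 1) (n + 1) := by
      rw [he_succ ht1 m n,
        show n + (m + 1) + 1 = (n + m + 1) + 1 by omega,
        show n + 1 + m + 1 = (n + m + 1) + 1 by omega, pow_succ]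
      field_simp
      ring
    rw [hfun, hval] at h3
    exact h3

lemma coeff_top (N : ℕ) : eulerianCoeff (N + 1) (N + 1) t
    = ((N:ℝ) + 1) * t * eulerianCoeff N N t := by
  rw [eulerianCoeff]
  simp

lemma coeff_rec (k N : ℕ) (hkN : k ≤ N) :
    eulerianCoeff k (N + 1) t
      = ((k:ℝ) + 1) * eulerianCoeff k N t + (k:ℝ) * t * eulerianCoeff (k - 1) N t := by
  cases k with
  | zero => simp [eulerianCoeff]
  | succ m =>
    have hm : m + 1 ≤ N := hkN
    rw [eulerianCoeff, eulerianCoeff]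
    rw [show N + 1 - (m + 1) + 1 = (N - (m + 1) + 1) + 1 by omega]
    rw [Finset.sum_range_succ' (fun j => ((m:ℝ) + 2) ^ j * eulerianCoeff m (N + 1 - j - 1) t)]
    have he1 : ∀ j, N + 1 - (j + 1) - 1 = N - j - 1 := fun j => by omega
    have he2 : (fun j => ((m:ℝ) + 2) ^ (j + 1) * eulerianCoeff m (N + 1 - (j + 1) - 1) t)
        = fun j => ((m:ℝ) + 2) * (((m:ℝ) + 2) ^ j * eulerianCoeff m (N - j - 1) t) := by
      funext j; rw [he1 j, pow_succ]; ring
    simp only [he2]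
    rw [← Finset.mul_sum]
    show ((m:ℝ) + 1) * t * (((m:ℝ) + 2) * ∑ j ∈ Finset.range (N - (m + 1) + 1),
        ((m:ℝ) + 2) ^ j * eulerianCoeff m (N - j - 1) t
        + ((m:ℝ) + 2) ^ 0 * eulerianCoeff m (N + 1 - 0 - 1) t) = _
    rw [show N + 1 - 0 - 1 = N from rfl, show ((m + 1 : ℕ):ℝ) = (m:ℝ) + 1 by push_cast; ring]
    rw [show (m + 1 : ℕ) - 1 = m from rfl]
    ring

lemma sumB (ht : |t| < 1) :
    ∀ N n : ℕ,
    ∑ k ∈ Finset.range (N + 1),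
        eulerianCoeff k N t * ((1 - t) ^ (k + 1))⁻¹ * higherEulerian t (k + 1) n
      = ((1 - t) ^ (N + 1))⁻¹ * higherEulerian t 1 (n + N) := by
  have ht1 : t ≠ 1 := ne_of_lt (abs_lt.1 ht).2
  have h1t : (1:ℝ) - t ≠ 0 := ne_of_gt (by linarith [(abs_lt.1 ht).2])
  intro N
  induction N with
  | zero => intro n; simp [eulerianCoeff]
  | succ N ih =>
    intro n
    have hrhs : ((1 - t) ^ (N + 1 + 1))⁻¹ * higherEulerian t 1 (n + (N + 1))
        = ∑ k ∈ Finset.range (N + 1),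
            (((k:ℝ) + 1) * eulerianCoeff k N t * ((1 - t) ^ (k + 1))⁻¹
                * higherEulerian t (k + 1) n
              + ((k:ℝ) + 1) * t * eulerianCoeff k N t * ((1 - t) ^ (k + 1 + 1))⁻¹
                * higherEulerian t (k + 1 + 1) n) := by
      have h1 : higherEulerian t 1 (n + (N + 1)) = higherEulerian t 1 ((n + 1) + N) := by
        rw [show n + (N + 1) = (n + 1) + N by omega]
      rw [h1, pow_succ, mul_inv]
      calc ((1 - t) ^ (N + 1))⁻¹ * (1 - t)⁻¹ * higherEulerian t 1 (n + 1 + N)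
          = (1 - t)⁻¹ * (((1 - t) ^ (N + 1))⁻¹ * higherEulerian t 1 (n + 1 + N)) := by ring
        _ = (1 - t)⁻¹ * ∑ k ∈ Finset.range (N + 1),
              eulerianCoeff k N t * ((1 - t) ^ (k + 1))⁻¹
                * higherEulerian t (k + 1) (n + 1) := by rw [ih (n + 1)]
        _ = _ := by
            rw [Finset.mul_sum]
            refine Finset.sum_congr rfl fun k _ => ?_
            rw [he_succ ht1 k n]
            have hk1 : ((1:ℝ) - t) ^ (k + 1) ≠ 0 := pow_ne_zero _ h1t
            field_simp
            ring
    rw [Finset.sum_range_succ]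
    have hsplit : ∑ k ∈ Finset.range (N + 1),
        eulerianCoeff k (N + 1) t * ((1 - t) ^ (k + 1))⁻¹ * higherEulerian t (k + 1) n
        = ∑ k ∈ Finset.range (N + 1),
            (((k:ℝ) + 1) * eulerianCoeff k N t * ((1 - t) ^ (k + 1))⁻¹
              * higherEulerian t (k + 1) n)
          + ∑ k ∈ Finset.range (N + 1),
            ((k:ℝ) * t * eulerianCoeff (k - 1) N t * ((1 - t) ^ (k + 1))⁻¹
              * higherEulerian t (k + 1) n) := by
      rw [← Finset.sum_add_distrib]
      refine Finset.sum_congr rfl fun k hk => ?_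
      rw [coeff_rec k N (Nat.lt_succ_iff.mp (Finset.mem_range.mp hk))]
      ring
    have hshift : ∑ k ∈ Finset.range (N + 1),
        ((k:ℝ) * t * eulerianCoeff (k - 1) N t * ((1 - t) ^ (k + 1))⁻¹
          * higherEulerian t (k + 1) n)
        = ∑ k ∈ Finset.range N,
            (((k:ℝ) + 1) * t * eulerianCoeff k N t * ((1 - t) ^ (k + 1 + 1))⁻¹
              * higherEulerian t (k + 1 + 1) n) := by
      rw [Finset.sum_range_succ' (fun k => (k:ℝ) * t * eulerianCoeff (k - 1) N t
        * ((1 - t) ^ (k + 1))⁻¹ * higherEulerian t (k + 1) n)]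
      simp only [Nat.cast_zero, zero_mul, add_zero, Nat.add_sub_cancel, Nat.cast_add,
        Nat.cast_one]
    rw [hsplit, hshift, coeff_top, hrhs, add_assoc,
      ← Finset.sum_range_succ (fun k => ((k:ℝ) + 1) * t * eulerianCoeff k N t
        * ((1 - t) ^ (k + 1 + 1))⁻¹ * higherEulerian t (k + 1 + 1) n) N,
      ← Finset.sum_add_distrib]

theorem eulerian_series_identity (t : ℝ) (ht : |t| < 1) (n N : ℕ) :
    HasSum (fun j : ℕ => t ^ j * ((j : ℝ) + 1) ^ (n + N))
      (((1 - t) ^ n)⁻¹ *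
        ∑ i ∈ Finset.Icc 1 (N + 1),
          eulerianCoeff (i - 1) N t * ((1 - t) ^ i)⁻¹ * higherEulerian t i n) := by
  have ht1 : t ≠ 1 := ne_of_lt (abs_lt.1 ht).2
  have h1t : (1:ℝ) - t ≠ 0 := ne_of_gt (by linarith [(abs_lt.1 ht).2])
  have hIcc : ∑ i ∈ Finset.Icc 1 (N + 1),
      eulerianCoeff (i - 1) N t * ((1 - t) ^ i)⁻¹ * higherEulerian t i n
      = ∑ k ∈ Finset.range (N + 1),
          eulerianCoeff k N t * ((1 - t) ^ (k + 1))⁻¹ * higherEulerian t (k + 1) n := by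
    rw [← Finset.Ico_add_one_right_eq_Icc, Finset.sum_Ico_eq_sum_range]
    refine Finset.sum_congr (by norm_num) fun k _ => ?_
    rw [show 1 + k = k + 1 by omega]
    simp
  rw [hIcc, sumB ht N n]
  have key := keyHasSum ht (n + N) 0
  simp only [Nat.add_zero, Nat.choose_zero_right, Nat.cast_one, one_mul, Nat.cast_zero,
    add_zero, zero_add] at key
  have hval : ((1 - t) ^ (n + N + 1))⁻¹ * higherEulerian t 1 (n + N)
      = ((1 - t) ^ n)⁻¹ * (((1 - t) ^ (N + 1))⁻¹ * higherEulerian t 1 (n + N)) := by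
    rw [show n + N + 1 = n + (N + 1) by omega, pow_add, mul_inv]
    ring
  rw [hval] at key
  exact key

end
end

section
/- Let t be a real number with t ≠ 1 and let A_n(t) denote the n-th derivative at x = 0 of the function x ↦ (1-t)/(e^{x(t-1)} - t). Then A_0(t) = 1, and for every integer n ≥ 1, A_n(t) = (1/(t-1)) · Σ_{l=0}^{n-1} binom(n,l) · A_l(t) · (t-1)^{n-l}. -/
open Finset

lemma pascal_sum (a b : ℕ → ℝ) (n : ℕ) :
    ∑ i ∈ range (n+1), (n.choose i : ℝ) * (a (i+1) * b (n-i) + a i * b (n-i+1)) =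
      ∑ i ∈ range (n+2), ((n+1).choose i : ℝ) * (a i * b (n+1-i)) := by
  have h1 : ∑ i ∈ range (n+2), ((n+1).choose i : ℝ) * (a i * b (n+1-i)) =
      (∑ i ∈ range (n+1), ((n+1).choose (i+1) : ℝ) * (a (i+1) * b (n-i)))
        + a 0 * b (n+1) := by
    rw [Finset.sum_range_succ' (fun i => ((n+1).choose i : ℝ) * (a i * b (n+1-i))) (n+1)]
    simp [Nat.succ_sub_succ]
  have h2 : ∑ i ∈ range (n+2), (n.choose i : ℝ) * (a i * b (n+1-i)) =
      (∑ i ∈ range (n+1), (n.choose (i+1) : ℝ) * (a (i+1) * b (n-i)))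
        + a 0 * b (n+1) := by
    rw [Finset.sum_range_succ' (fun i => (n.choose i : ℝ) * (a i * b (n+1-i))) (n+1)]
    simp [Nat.succ_sub_succ]
  have h3 : ∑ i ∈ range (n+2), (n.choose i : ℝ) * (a i * b (n+1-i)) =
      ∑ i ∈ range (n+1), (n.choose i : ℝ) * (a i * b (n+1-i)) := by
    rw [Finset.sum_range_succ]
    simp
  rw [h1]
  have h4 : ∀ i ∈ range (n+1), ((n+1).choose (i+1) : ℝ) * (a (i+1) * b (n-i)) =
      (n.choose i : ℝ) * (a (i+1) * b (n-i)) + (n.choose (i+1) : ℝ) * (a (i+1) * b (n-i)) := by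
    intro i hi
    rw [Nat.choose_succ_succ]
    push_cast
    ring
  rw [Finset.sum_congr rfl h4, Finset.sum_add_distrib]
  have h5 : ∀ i ∈ range (n+1), (n.choose i : ℝ) * (a (i+1) * b (n-i) + a i * b (n-i+1)) =
      (n.choose i : ℝ) * (a (i+1) * b (n-i)) + (n.choose i : ℝ) * (a i * b (n+1-i)) := by
    intro i hi
    rw [mem_range] at hi
    have : n - i + 1 = n + 1 - i := by omega
    rw [this]; ring
  rw [Finset.sum_congr rfl h5, Finset.sum_add_distrib, ← h3, h2]
  ring


open Finset

lemma leibniz_within {s : Set ℝ} (hs : IsOpen s) {f g : ℝ → ℝ}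
    (hf : ContDiffOn ℝ (⊤ : ℕ∞) f s) (hg : ContDiffOn ℝ (⊤ : ℕ∞) g s) :
    ∀ n, ∀ x ∈ s, iteratedDerivWithin n (fun y => f y * g y) s x =
      ∑ i ∈ range (n+1), (n.choose i : ℝ) * (iteratedDerivWithin i f s x
        * iteratedDerivWithin (n-i) g s x) := by
  intro n
  induction n with
  | zero => intro x hx; simp [iteratedDerivWithin_zero]
  | succ n ih =>
    intro x hx
    have hud : UniqueDiffOn ℝ s := hs.uniqueDiffOn
    -- differentiability of iterated derivatives
    have hdiff : ∀ (m : ℕ) (h : ℝ → ℝ), ContDiffOn ℝ (⊤ : ℕ∞) h s →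
        DifferentiableAt ℝ (iteratedDerivWithin m h s) x ∧
        deriv (iteratedDerivWithin m h s) x = iteratedDerivWithin (m+1) h s x := by
      intro m h hh
      have hd : DifferentiableOn ℝ (iteratedDerivWithin m h s) s := by
        apply hh.differentiableOn_iteratedDerivWithin _ hud
        exact_mod_cast WithTop.coe_lt_coe.mpr (WithTop.coe_lt_top m)
      have hda : DifferentiableAt ℝ (iteratedDerivWithin m h s) x :=
        (hd x hx).differentiableAt (hs.mem_nhds hx)
      refine ⟨hda, ?_⟩
      rw [← derivWithin_of_isOpen hs hx, ← iteratedDerivWithin_succ]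
    rw [iteratedDerivWithin_succ, derivWithin_of_isOpen hs hx]
    have hev : iteratedDerivWithin n (fun y => f y * g y) s =ᶠ[nhds x]
        (fun y => ∑ i ∈ range (n+1), (n.choose i : ℝ) * (iteratedDerivWithin i f s y
          * iteratedDerivWithin (n-i) g s y)) := by
      filter_upwards [hs.mem_nhds hx] with y hy using ih y hy
    rw [hev.deriv_eq]
    have hterm : ∀ i ∈ range (n+1), HasDerivAt
        (fun y => (n.choose i : ℝ) * (iteratedDerivWithin i f s y
          * iteratedDerivWithin (n-i) g s y))
        ((n.choose i : ℝ) * (iteratedDerivWithin (i+1) f s x * iteratedDerivWithin (n-i) g s x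
          + iteratedDerivWithin i f s x * iteratedDerivWithin (n-i+1) g s x)) x := by
      intro i _
      obtain ⟨hfd, hfe⟩ := hdiff i f hf
      obtain ⟨hgd, hge⟩ := hdiff (n-i) g hg
      have := (hfd.hasDerivAt.mul hgd.hasDerivAt).const_mul (n.choose i : ℝ)
      rwa [hfe, hge] at this
    have hsum : HasDerivAt (fun y => ∑ i ∈ range (n+1), (n.choose i : ℝ) *
        (iteratedDerivWithin i f s y * iteratedDerivWithin (n-i) g s y))
        (∑ i ∈ range (n+1), (n.choose i : ℝ) *
          (iteratedDerivWithin (i+1) f s x * iteratedDerivWithin (n-i) g s x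
            + iteratedDerivWithin i f s x * iteratedDerivWithin (n-i+1) g s x)) x :=
      HasDerivAt.fun_sum hterm
    rw [hsum.deriv]
    exact pascal_sum (fun i => iteratedDerivWithin i f s x)
      (fun j => iteratedDerivWithin j g s x) n

lemma iteratedDerivWithin_of_isOpen' {s : Set ℝ} {f : ℝ → ℝ} {x : ℝ} (n : ℕ)
    (hs : IsOpen s) (hx : x ∈ s) : iteratedDerivWithin n f s x = iteratedDeriv n f x := by
  rw [iteratedDerivWithin_eq_iteratedFDerivWithin, iteratedDeriv_eq_iteratedFDeriv,
    iteratedFDerivWithin_of_isOpen n hs hx]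

lemma iteratedDeriv_const_zero' (n : ℕ) (c : ℝ) :
    iteratedDeriv (n+1) (fun _ : ℝ => c) = fun _ => 0 := by
  induction n generalizing c with
  | zero => ext x; rw [iteratedDeriv_one]; simp
  | succ m ih =>
    rw [iteratedDeriv_succ']
    simpa using ih 0

theorem eulerian_recurrence_solved (t : ℝ) (ht : t ≠ 1)
    (A : ℕ → ℝ)
    (hA : ∀ n, A n = iteratedDeriv n (fun x : ℝ => (1 - t) / (Real.exp (x * (t - 1)) - t)) 0) :
    A 0 = 1 ∧ ∀ n : ℕ, 1 ≤ n →
      A n = (1 / (t - 1)) * ∑ l ∈ Finset.range n, (n.choose l : ℝ) * A l * (t - 1) ^ (n - l) := by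
  have ht' : t - 1 ≠ 0 := sub_ne_zero.mpr ht
  have ht'' : (1 : ℝ) - t ≠ 0 := sub_ne_zero.mpr (Ne.symm ht)
  set g : ℝ → ℝ := fun x => Real.exp (x * (t - 1)) - t with hgdef
  set f : ℝ → ℝ := fun x => (1 - t) / g x with hfdef
  have hgc : ContDiff ℝ (⊤ : ℕ∞) g :=
    (Real.contDiff_exp.comp (contDiff_id.mul contDiff_const)).sub contDiff_const
  set s : Set ℝ := {x | g x ≠ 0} with hsdef
  have hs : IsOpen s := isOpen_ne_fun hgc.continuous continuous_const
  have hg0 : g 0 = 1 - t := by simp [hgdef]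
  have h0s : (0 : ℝ) ∈ s := by simp [hsdef, hg0, ht'']
  have hfc : ContDiffOn ℝ (⊤ : ℕ∞) f s :=
    ContDiffOn.div contDiffOn_const hgc.contDiffOn (fun x hx => hx)
  have hAeq : ∀ n, A n = iteratedDerivWithin n f s 0 := by
    intro n
    rw [hA n, ← iteratedDerivWithin_of_isOpen' n hs h0s]
  have hfg : Set.EqOn (fun y => f y * g y) (fun _ => (1 - t)) s := by
    intro y hy
    simp only [hfdef]
    exact div_mul_cancel₀ (1 - t) hy
  have hfgzero : ∀ n : ℕ, 1 ≤ n → iteratedDerivWithin n (fun y => f y * g y) s 0 = 0 := by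
    intro n hn
    obtain ⟨m, rfl⟩ := Nat.exists_eq_add_of_le hn
    rw [iteratedDerivWithin_congr hfg h0s,
      iteratedDerivWithin_of_isOpen' _ hs h0s]
    rw [add_comm 1 m, iteratedDeriv_const_zero' m (1 - t)]
  have hderivg : deriv g = fun x => (t - 1) * Real.exp ((t - 1) * x) := by
    funext x
    have h : HasDerivAt g (Real.exp (x * (t - 1)) * (t - 1)) x := by
      simpa [hgdef] using (((hasDerivAt_id x).mul_const (t - 1)).exp.sub_const t)
    rw [h.deriv]; ring_nf
  have hgk : ∀ m : ℕ, iteratedDeriv (m + 1) g 0 = (t - 1) ^ (m + 1) := by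
    intro m
    rw [iteratedDeriv_succ', hderivg]
    have hcm : iteratedDeriv m (fun x => (t - 1) * Real.exp ((t - 1) * x)) 0 =
        (t - 1) * iteratedDeriv m (fun x => Real.exp ((t - 1) * x)) 0 := by
      rw [← iteratedDerivWithin_univ, ← iteratedDerivWithin_univ]
      exact iteratedDerivWithin_const_mul (h := uniqueDiffOn_univ) (hx := Set.mem_univ 0)
        (t - 1) (by fun_prop)
    rw [hcm, iteratedDeriv_exp_const_mul m (t - 1)]
    show (t - 1) * ((t - 1) ^ m * Real.exp ((t - 1) * 0)) = (t - 1) ^ (m + 1)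
    rw [mul_zero, Real.exp_zero]; ring
  have hA0 : A 0 = 1 := by
    rw [hA 0, iteratedDeriv_zero]
    show (1 - t) / (Real.exp (0 * (t - 1)) - t) = 1
    rw [zero_mul, Real.exp_zero]
    exact div_self ht''
  refine ⟨hA0, ?_⟩
  intro n hn
  have hlb := leibniz_within hs hfc (hgc.contDiffOn) n 0 h0s
  rw [hfgzero n hn] at hlb
  have hlb2 : (0 : ℝ) = (∑ i ∈ Finset.range n, (n.choose i : ℝ) * (A i * (t - 1) ^ (n - i)))
      + A n * (1 - t) := by
    rw [hlb, Finset.sum_range_succ]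
    have e1 : ∀ i ∈ Finset.range n, (n.choose i : ℝ) *
        (iteratedDerivWithin i f s 0 * iteratedDerivWithin (n-i) g s 0) =
        (n.choose i : ℝ) * (A i * (t - 1) ^ (n - i)) := by
      intro i hi
      rw [Finset.mem_range] at hi
      rw [← hAeq i]
      obtain ⟨m, hm⟩ : ∃ m, n - i = m + 1 := ⟨n - i - 1, by omega⟩
      rw [iteratedDerivWithin_of_isOpen' _ hs h0s, hm, hgk m]
    rw [Finset.sum_congr rfl e1]
    congr 1
    rw [Nat.choose_self, Nat.sub_self, iteratedDerivWithin_of_isOpen' 0 hs h0s,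
      iteratedDeriv_zero, hg0, ← hAeq n]
    push_cast; ring
  have key : A n * (t - 1) = ∑ i ∈ Finset.range n,
      (n.choose i : ℝ) * (A i * (t - 1) ^ (n - i)) := by linarith [hlb2]
  have hsum : ∑ i ∈ Finset.range n, (n.choose i : ℝ) * (A i * (t - 1) ^ (n - i)) =
      ∑ l ∈ Finset.range n, (n.choose l : ℝ) * A l * (t - 1) ^ (n - l) :=
    Finset.sum_congr rfl (fun i _ => by ring)
  rw [hsum] at key
  rw [← key]
  field_simp
end
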